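/- Every oriented-convex n-gon (n ≥ 3) in the hyperbolic plane has positive signed area, and every collinear n-gon has signed area zero; i.e. if z₁,…,zₙ ∈ ℍ is oriented-convex then F(z₁,…,zₙ) > 0, and if z₁,…,zₙ are collinear then F(z₁,…,zₙ) = 0. -/

import Mathlib

open Real Finset

noncomputable section

/-- Points of `ℝ³`. -/
abbrev V3 : Type := Fin 3 → ℝ

/-- The pseudo-Euclidean scalar product `⟨x,y⟩ = x₀y₀ − x₁y₁ − x₂y₂`. -/
def pscal (x y : V3) : ℝ := x 0 * y 0 - x 1 * y 1 - x 2 * y 2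

/-- The hyperboloid model `ℍ` of the hyperbolic plane. -/
def Hyp : Set V3 := {x | pscal x x = 1 ∧ 0 < x 0}

/-- Inverse hyperbolic cosine. -/
def arcoshR (x : ℝ) : ℝ := Real.log (x + Real.sqrt (x ^ 2 - 1))

/-- Hyperbolic distance `d(a,b) = arcosh ⟨a,b⟩`. -/
def dH (a b : V3) : ℝ := arcoshR (pscal a b)

/-- Determinant of the 3×3 matrix with columns `a`, `b`, `c`. -/
def det3 (a b c : V3) : ℝ :=
  a 0 * (b 1 * c 2 - b 2 * c 1) - b 0 * (a 1 * c 2 - a 2 * c 1) + c 0 * (a 1 * b 2 - a 2 * b 1)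

/-- `S_ab = sinh(d(a,b)/2)`. -/
def SS (a b : V3) : ℝ := Real.sinh (dH a b / 2)

/-- Signed area of the triangle `a b c`. -/
def triArea (a b c : V3) : ℝ :=
  2 * Real.arctan (det3 a b c / (pscal a b + pscal b c + pscal c a + 1))

/-- Signed area of the `n`-gon with vertices `z 1, …, z n`. -/
def polyArea (n : ℕ) (z : ℕ → V3) : ℝ :=
  ∑ k ∈ Finset.Ico 2 n, triArea (z 1) (z k) (z (k + 1))

/-- Cyclic successor on `{1, …, n}`. -/
def nxt (n k : ℕ) : ℕ := k % n + 1

/-- Oriented convexity of the `n`-gon `z 1, …, z n`. -/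
def OrientedConvex (n : ℕ) (z : ℕ → V3) : Prop :=
  ∀ k ∈ Finset.Icc 1 n, ∀ j ∈ Finset.Icc 1 n,
    j ≠ k → j ≠ nxt n k → 0 < det3 (z k) (z (nxt n k)) (z j)

/-- A set of points lies in a common 2-dimensional linear subspace of `ℝ³`. -/
def Collin (s : Set V3) : Prop :=
  ∃ W : Submodule ℝ V3, Module.finrank ℝ W = 2 ∧ ∀ x ∈ s, x ∈ W

/-- A set of points lies in a common affine plane of `ℝ³` not containing the origin. -/
def Cocyc (s : Set V3) : Prop :=
  ∃ u : V3, ∃ p : ℝ, u ≠ 0 ∧ p ≠ 0 ∧ ∀ x ∈ s, pscal u x = p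

lemma pscal_ge_one {a b : V3} (ha : a ∈ Hyp) (hb : b ∈ Hyp) : 1 ≤ pscal a b := by
  obtain ⟨ha1, ha0⟩ := ha
  obtain ⟨hb1, hb0⟩ := hb
  unfold pscal at *
  nlinarith [sq_nonneg (a 1 * b 2 - a 2 * b 1), sq_nonneg (a 0 - b 0), sq_nonneg (a 0 + b 0),
    mul_pos ha0 hb0, sq_nonneg (a 1 * b 0 - a 0 * b 1), sq_nonneg (a 2 * b 0 - a 0 * b 2)]

lemma det3_zero {W : Submodule ℝ V3} (hW : Module.finrank ℝ W = 2)
    {a b c : V3} (ha : a ∈ W) (hb : b ∈ W) (hc : c ∈ W) : det3 a b c = 0 := by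
  by_contra h
  have hmat : (Matrix.of ![a, b, c]).det ≠ 0 := by
    have : (Matrix.of ![a, b, c]).det = det3 a b c := by
      rw [Matrix.det_fin_three]; unfold det3; simp [Matrix.of_apply]; ring
    rw [this]; exact h
  have hli : LinearIndependent ℝ (fun i => (Matrix.of ![a, b, c]) i) :=
    Matrix.linearIndependent_rows_iff_isUnit.2
      ((Matrix.isUnit_iff_isUnit_det _).2 (isUnit_iff_ne_zero.2 hmat))
  have hli' : LinearIndependent ℝ ![a, b, c] := hli
  have hmem : ∀ i : Fin 3, (![a, b, c] : Fin 3 → V3) i ∈ W := by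
    intro i; fin_cases i <;> assumption
  set v : Fin 3 → W := fun i => ⟨![a, b, c] i, hmem i⟩ with hv
  have hliW : LinearIndependent ℝ v := by
    apply LinearIndependent.of_comp W.subtype
    convert hli'
    rfl
  have := hliW.fintype_card_le_finrank
  simp [hW] at this

lemma det3_cyc (a b c : V3) : det3 a b c = det3 b c a := by
  unfold det3; ring

/-- Lemma 2.1: every oriented-convex `n`-gon has positive signed area, and every
collinear `n`-gon has signed area zero. -/
theorem orientedConvex_area_pos_and_collinear_area_zero
    (n : ℕ) (hn : 3 ≤ n) (z : ℕ → V3)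
    (hz : ∀ k ∈ Finset.Icc 1 n, z k ∈ Hyp) :
    (OrientedConvex n z → 0 < polyArea n z) ∧
    (Collin (z '' Set.Icc 1 n) → polyArea n z = 0) := by
  constructor
  · intro hc
    unfold polyArea
    apply Finset.sum_pos
    · intro k hk
      rw [Finset.mem_Ico] at hk
      obtain ⟨h2k, hkn⟩ := hk
      have hkI : k ∈ Finset.Icc 1 n := Finset.mem_Icc.2 ⟨by omega, by omega⟩
      have hk1I : k + 1 ∈ Finset.Icc 1 n := Finset.mem_Icc.2 ⟨by omega, by omega⟩
      have h1I : (1 : ℕ) ∈ Finset.Icc 1 n := Finset.mem_Icc.2 ⟨le_refl 1, by omega⟩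
      have hnxt : nxt n k = k + 1 := by unfold nxt; rw [Nat.mod_eq_of_lt hkn]
      have hdet : 0 < det3 (z k) (z (k + 1)) (z 1) := by
        have := hc k hkI 1 h1I (by omega) (by omega : (1:ℕ) ≠ nxt n k)
        rwa [hnxt] at this
      have hdet' : 0 < det3 (z 1) (z k) (z (k + 1)) := by
        rw [det3_cyc]; exact hdet
      have hden : 0 < pscal (z 1) (z k) + pscal (z k) (z (k + 1)) + pscal (z (k + 1)) (z 1) + 1 := by
        have h1 := pscal_ge_one (hz 1 h1I) (hz k hkI)
        have h2 := pscal_ge_one (hz k hkI) (hz (k + 1) hk1I)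
        have h3 := pscal_ge_one (hz (k + 1) hk1I) (hz 1 h1I)
        linarith
      unfold triArea
      have := Real.arctan_strictMono (div_pos hdet' hden)
      rw [Real.arctan_zero] at this
      linarith
    · exact Finset.nonempty_Ico.2 (by omega)
  · rintro ⟨W, hW, hWmem⟩
    unfold polyArea
    apply Finset.sum_eq_zero
    intro k hk
    rw [Finset.mem_Ico] at hk
    have hz1 : z 1 ∈ W := hWmem _ ⟨1, ⟨le_refl 1, by omega⟩, rfl⟩
    have hzk : z k ∈ W := hWmem _ ⟨k, ⟨by omega, by omega⟩, rfl⟩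
    have hzk1 : z (k + 1) ∈ W := hWmem _ ⟨k + 1, ⟨by omega, by omega⟩, rfl⟩
    unfold triArea
    rw [det3_zero hW hz1 hzk hzk1, zero_div, Real.arctan_zero, mul_zero]
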